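/- arXiv:1001.5243 — 2 statements merged into one kernel-verified Lean document; each statement's English description precedes it below -/
import Mathlib

section
/- Let α, β ∈ V satisfy ⟨α,α⟩ < 0, ⟨β,β⟩ < 0 and ⟨α,β⟩ < 0, and assume there exists γ ∈ V with ⟨γ,γ⟩ > 0, ⟨γ,L⟩ > 0, ⟨α,γ⟩ ≤ 0 and ⟨β,γ⟩ ≥ 0. Then the following are equivalent: (j) β lies in the topological interior of the set Q̄ + ℝ_{≥0}·α = {q + tα : q ∈ Q̄, t ≥ 0}; (jj) the equation ⟨tβ − α, tβ − α⟩ = 0 has two distinct real solutions t (equivalently, ⟨α,β⟩² > ⟨α,α⟩·⟨β,β⟩); (jjj) every nonzero δ ∈ V with ⟨δ,δ⟩ ≥ 0, ⟨δ,L⟩ ≥ 0 and ⟨δ,β⟩ = 0 satisfies ⟨δ,α⟩ < 0. -/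
open scoped BigOperators

/-- The Minkowski intersection form of signature (1,r) on `ℝ^{r+1}`:
`⟨u,v⟩ = u₀v₀ − u₁v₁ − ⋯ − u_r v_r`. -/
noncomputable def mform (r : ℕ) (u v : Fin (r + 1) → ℝ) : ℝ :=
  u 0 * v 0 - ∑ i : Fin r, u i.succ * v i.succ

/-- The class `L = (1,0,…,0)` of a line. -/
def lclass (r : ℕ) : Fin (r + 1) → ℝ := fun i => if i = 0 then 1 else 0

/-- The canonical class `K = (−3,1,…,1)`. -/
def kclass (r : ℕ) : Fin (r + 1) → ℝ := fun i => if i = 0 then -3 else 1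

/-- `Q = {α : ⟨α,α⟩ ≥ 0, ⟨α,L⟩ > 0}`. -/
def Qset (r : ℕ) : Set (Fin (r + 1) → ℝ) :=
  {α | 0 ≤ mform r α α ∧ 0 < mform r α (lclass r)}

/-- `Q̄ = {α : ⟨α,α⟩ ≥ 0, ⟨α,L⟩ ≥ 0}`. -/
def Qbar (r : ℕ) : Set (Fin (r + 1) → ℝ) :=
  {α | 0 ≤ mform r α α ∧ 0 ≤ mform r α (lclass r)}

/-! ### Algebraic helper lemmas -/

lemma mform_comm (r : ℕ) (u v : Fin (r+1) → ℝ) : mform r u v = mform r v u := by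
  simp [mform, mul_comm]

lemma mform_add_left (r : ℕ) (u v w : Fin (r+1) → ℝ) :
    mform r (u + v) w = mform r u w + mform r v w := by
  simp [mform, add_mul, Finset.sum_add_distrib]; ring

lemma mform_smul_left (r : ℕ) (c : ℝ) (u w : Fin (r+1) → ℝ) :
    mform r (c • u) w = c * mform r u w := by
  simp only [mform, Pi.smul_apply, smul_eq_mul, mul_sub, Finset.mul_sum, mul_assoc]

lemma mform_neg_left (r : ℕ) (u w : Fin (r+1) → ℝ) :
    mform r (-u) w = - mform r u w := by
  have := mform_smul_left r (-1) u w; simpa using this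

lemma mform_sub_left (r : ℕ) (u v w : Fin (r+1) → ℝ) :
    mform r (u - v) w = mform r u w - mform r v w := by
  rw [sub_eq_add_neg, mform_add_left, mform_neg_left]; ring

lemma mform_add_right (r : ℕ) (w u v : Fin (r+1) → ℝ) :
    mform r w (u + v) = mform r w u + mform r w v := by
  rw [mform_comm, mform_add_left, mform_comm r u w, mform_comm r v w]

lemma mform_smul_right (r : ℕ) (c : ℝ) (w u : Fin (r+1) → ℝ) :
    mform r w (c • u) = c * mform r w u := by
  rw [mform_comm, mform_smul_left, mform_comm]

lemma mform_sub_right (r : ℕ) (w u v : Fin (r+1) → ℝ) :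
    mform r w (u - v) = mform r w u - mform r w v := by
  rw [mform_comm, mform_sub_left, mform_comm r u w, mform_comm r v w]

lemma mform_L (r : ℕ) (u : Fin (r+1) → ℝ) : mform r u (lclass r) = u 0 := by
  simp [mform, lclass, Fin.succ_ne_zero]

lemma mform_LL (r : ℕ) : mform r (lclass r) (lclass r) = 1 := by
  rw [mform_L]; simp [lclass]

lemma quad_eval (r : ℕ) (α β : Fin (r+1) → ℝ) (t : ℝ) :
    mform r (t • β - α) (t • β - α)
      = mform r β β * t^2 - 2 * mform r α β * t + mform r α α := by
  rw [mform_sub_left, mform_sub_right, mform_sub_right, mform_smul_left, mform_smul_right,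
    mform_smul_left, mform_comm r α (t • β), mform_smul_left, mform_comm r β α]
  ring

lemma mform_facts (r : ℕ) (u v : Fin (r+1) → ℝ) :
    mform r u v = u 0 * v 0 - ∑ i : Fin r, u i.succ * v i.succ ∧
    (∑ i : Fin r, u i.succ * v i.succ)^2
      ≤ (∑ i : Fin r, u i.succ * u i.succ) * (∑ i : Fin r, v i.succ * v i.succ) ∧
    0 ≤ ∑ i : Fin r, u i.succ * u i.succ := by
  refine ⟨rfl, ?_, Finset.sum_nonneg fun i _ => mul_self_nonneg _⟩
  have h := Finset.sum_mul_sq_le_sq_mul_sq Finset.univ (fun i : Fin r => u i.succ)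
    (fun i : Fin r => v i.succ)
  simpa [pow_two] using h

lemma mform_pair_nonneg (r : ℕ) (u v : Fin (r+1) → ℝ)
    (huu : 0 ≤ mform r u u) (hu0 : 0 ≤ u 0)
    (hvv : 0 ≤ mform r v v) (hv0 : 0 ≤ v 0) : 0 ≤ mform r u v := by
  obtain ⟨huv, hcs, hsu⟩ := mform_facts r u v
  obtain ⟨hu, -, -⟩ := mform_facts r u u
  obtain ⟨hv, -, hsv⟩ := mform_facts r v v
  rw [hu] at huu; rw [hv] at hvv; rw [huv]
  nlinarith [mul_nonneg hu0 hv0, mul_nonneg (mul_nonneg hu0 hv0) (mul_nonneg hu0 hv0),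
    mul_le_mul_of_nonneg_left hvv hsu]

lemma mform_pair_pos (r : ℕ) (u v : Fin (r+1) → ℝ)
    (huu : 0 < mform r u u) (hu0 : 0 < u 0)
    (hvv : 0 < mform r v v) (hv0 : 0 < v 0) : 0 < mform r u v := by
  obtain ⟨huv, hcs, hsu⟩ := mform_facts r u v
  obtain ⟨hu, -, -⟩ := mform_facts r u u
  obtain ⟨hv, -, hsv⟩ := mform_facts r v v
  rw [hu] at huu; rw [hv] at hvv; rw [huv]
  nlinarith [mul_pos hu0 hv0, mul_le_mul_of_nonneg_left hvv.le hsu]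

lemma mform_apply0_ne (r : ℕ) (u : Fin (r+1) → ℝ) (huu : 0 < mform r u u) : u 0 ≠ 0 := by
  obtain ⟨hu, -, hsu⟩ := mform_facts r u u
  intro h0; rw [hu, h0] at huu; nlinarith

/-! ### Topological helpers -/

lemma mform_cont (r : ℕ) : Continuous (fun x : Fin (r+1) → ℝ => mform r x x) := by
  unfold mform
  exact ((continuous_apply 0).mul (continuous_apply 0)).sub
    (continuous_finset_sum _ fun i _ => (continuous_apply i.succ).mul (continuous_apply i.succ))

lemma open_pos_cone (r : ℕ) :
    IsOpen {x : Fin (r+1) → ℝ | 0 < mform r x x ∧ 0 < x 0} :=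
  (isOpen_lt continuous_const (mform_cont r)).inter
    (isOpen_lt continuous_const (continuous_apply 0))

/-! ### Main implication lemmas -/

/-- (jj) is equivalent to positivity of the discriminant. -/
lemma roots_iff (r : ℕ) (α β : Fin (r+1) → ℝ) (hββ : mform r β β < 0) :
    (∃ t₁ t₂ : ℝ, t₁ ≠ t₂ ∧ mform r (t₁ • β - α) (t₁ • β - α) = 0 ∧
        mform r (t₂ • β - α) (t₂ • β - α) = 0) ↔
      mform r α α * mform r β β < (mform r α β)^2 := by
  set A := mform r α α with hA
  set B := mform r α β with hB
  set C := mform r β β with hC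
  constructor
  · rintro ⟨t₁, t₂, hne, e1, e2⟩
    rw [quad_eval] at e1 e2
    have hne' : t₁ - t₂ ≠ 0 := sub_ne_zero.mpr hne
    have h1 : C * (t₁ + t₂) = 2 * B := by
      have h : (t₁ - t₂) * (C * (t₁ + t₂) - 2 * B) = 0 := by linear_combination e1 - e2
      have := (mul_eq_zero.mp h).resolve_left hne'
      linarith
    have h2 : C * (t₁ * t₂) = A := by linear_combination (-1) * e1 + t₁ * h1
    have hpos : 0 < (C * (t₁ - t₂)) * (C * (t₁ - t₂)) :=
      mul_self_pos.mpr (mul_ne_zero hββ.ne hne')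
    nlinarith [h1, h2, hpos]
  · intro hD
    have hD' : (0:ℝ) ≤ B^2 - A*C := by nlinarith
    set s := Real.sqrt (B^2 - A*C) with hs
    have hs2 : s^2 = B^2 - A*C := Real.sq_sqrt hD'
    have hspos : 0 < s := Real.sqrt_pos.mpr (by nlinarith)
    have hCne : C ≠ 0 := hββ.ne
    refine ⟨(B+s)/C, (B-s)/C, ?_, ?_, ?_⟩
    · intro h
      have : B + s = B - s := by
        field_simp at h; linarith
      linarith
    · rw [quad_eval, ← hA, ← hB, ← hC]
      field_simp
      linear_combination hs2
    · rw [quad_eval, ← hA, ← hB, ← hC]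
      field_simp
      linear_combination hs2

/-- (j) implies (jjj). -/
lemma j_implies_jjj (r : ℕ) (α β : Fin (r+1) → ℝ)
    (hβ : β ∈ interior {x : Fin (r + 1) → ℝ | ∃ q ∈ Qbar r, ∃ t : ℝ, 0 ≤ t ∧ x = q + t • α}) :
    ∀ δ : Fin (r + 1) → ℝ, δ ≠ 0 → 0 ≤ mform r δ δ → 0 ≤ mform r δ (lclass r) →
        mform r δ β = 0 → mform r δ α < 0 := by
  set Cs : Set (Fin (r+1) → ℝ) :=
    {x : Fin (r + 1) → ℝ | ∃ q ∈ Qbar r, ∃ t : ℝ, 0 ≤ t ∧ x = q + t • α} with hCs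
  intro δ hδ0 hδδ hδL hδβ
  by_contra hcon
  push_neg at hcon
  have hδ0' : 0 ≤ δ 0 := by rwa [mform_L] at hδL
  -- the functional x ↦ ⟨δ,x⟩ is nonnegative on Cs
  have hfC : ∀ x ∈ Cs, 0 ≤ mform r δ x := by
    rintro x ⟨q, hq, t, ht, rfl⟩
    rw [mform_add_right, mform_smul_right]
    have h1 : 0 ≤ mform r δ q :=
      mform_pair_nonneg r δ q hδδ hδ0' hq.1 (by rw [← mform_L r q]; exact hq.2)
    have h2 : 0 ≤ t * mform r δ α := mul_nonneg ht hcon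
    linarith
  -- it vanishes on a neighborhood of β, hence is the zero functional
  have key : ∀ v : Fin (r+1) → ℝ, mform r δ v = 0 := by
    intro v
    have hmem : Cs ∈ nhds β := mem_interior_iff_mem_nhds.mp hβ
    have hc : ContinuousAt (fun c : ℝ => β + c • v) 0 :=
      (continuous_const.add (continuous_id.smul continuous_const)).continuousAt
    have hpre : (fun c : ℝ => β + c • v) ⁻¹' Cs ∈ nhds (0:ℝ) := by
      apply hc.preimage_mem_nhds
      simpa using hmem
    obtain ⟨ε, hε, hball⟩ := Metric.mem_nhds_iff.mp hpre
    have hmem1 : β + (ε/2) • v ∈ Cs := by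
      apply hball
      rw [Metric.mem_ball, Real.dist_eq, sub_zero, abs_of_pos (by linarith)]
      linarith
    have hmem2 : β + (-(ε/2)) • v ∈ Cs := by
      apply hball
      rw [Metric.mem_ball, Real.dist_eq, sub_zero, abs_of_neg (by linarith)]
      linarith
    have e1 := hfC _ hmem1
    have e2 := hfC _ hmem2
    rw [mform_add_right, mform_smul_right, hδβ] at e1 e2
    have h1 : 0 ≤ (ε/2) * mform r δ v := by linarith
    have h2 : 0 ≤ (-(ε/2)) * mform r δ v := by linarith
    nlinarith
  -- nondegeneracy: δ = 0, contradiction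
  apply hδ0
  have hv := key (fun i => if i = 0 then δ 0 else -δ i)
  have hv' : δ 0 * δ 0 + ∑ i : Fin r, δ i.succ * δ i.succ = 0 := by
    rw [mform] at hv
    simp only [Fin.succ_ne_zero, if_false, if_true, reduceIte, mul_neg,
      Finset.sum_neg_distrib, sub_neg_eq_add] at hv
    exact hv
  have hsum0 : ∑ i : Fin r, δ i.succ * δ i.succ = 0 := by
    have := Finset.sum_nonneg (fun (i : Fin r) (_ : i ∈ Finset.univ) => mul_self_nonneg (δ i.succ))
    nlinarith [mul_self_nonneg (δ 0)]
  have h00 : δ 0 = 0 := by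
    have := Finset.sum_nonneg (fun (i : Fin r) (_ : i ∈ Finset.univ) => mul_self_nonneg (δ i.succ))
    nlinarith [mul_self_nonneg (δ 0)]
  have hsucc : ∀ i : Fin r, δ i.succ = 0 := by
    intro i
    have := (Finset.sum_eq_zero_iff_of_nonneg
      (fun (i : Fin r) (_ : i ∈ Finset.univ) => mul_self_nonneg (δ i.succ))).mp hsum0 i (Finset.mem_univ i)
    exact mul_self_eq_zero.mp this
  have hall : ∀ j : Fin (r+1), δ j = 0 := fun j => Fin.cases h00 hsucc j
  funext j
  rw [hall j, Pi.zero_apply]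

/-- If the discriminant is nonpositive, (jjj) fails. -/
lemma not_jjj (r : ℕ) (α β : Fin (r+1) → ℝ)
    (hαα : mform r α α < 0) (hββ : mform r β β < 0) (hαβ : mform r α β < 0)
    (hD : (mform r α β)^2 ≤ mform r α α * mform r β β) :
    ¬ (∀ δ : Fin (r + 1) → ℝ, δ ≠ 0 → 0 ≤ mform r δ δ → 0 ≤ mform r δ (lclass r) →
        mform r δ β = 0 → mform r δ α < 0) := by
  intro hjjj
  set A := mform r α α with hA
  set B := mform r α β with hB
  set C := mform r β β with hC
  have hzL : mform r (0 : Fin (r+1) → ℝ) (lclass r) = 0 := by simp [mform]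
  rcases eq_or_lt_of_le hD with heq | hlt
  · -- B^2 = A*C
    set δc : Fin (r+1) → ℝ := C • α - B • β with hδc
    have hcβ : mform r δc β = 0 := by
      rw [hδc, mform_sub_left, mform_smul_left, mform_smul_left, ← hB, ← hC]; ring
    have hcα : mform r δc α = 0 := by
      rw [hδc, mform_sub_left, mform_smul_left, mform_smul_left, ← hA,
        mform_comm r β α, ← hB]
      linear_combination - heq
    have hcc : mform r δc δc = 0 := by
      rw [hδc, mform_sub_left, mform_smul_left, mform_smul_left, mform_comm r α δc,
        mform_comm r β δc, hcα, hcβ]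
      ring
    by_cases h0 : δc = 0
    · -- α and β are proportional; use a timelike vector orthogonal to β
      set δa : Fin (r+1) → ℝ := (β 0) • β - C • lclass r with hδa
      have haβ : mform r δa β = 0 := by
        rw [hδa, mform_sub_left, mform_smul_left, mform_smul_left, ← hC,
          mform_comm r (lclass r) β, mform_L]
        ring
      have haL : mform r δa (lclass r) = β 0 * β 0 - C := by
        rw [hδa, mform_sub_left, mform_smul_left, mform_smul_left, mform_L, mform_LL]
        ring
      have haLpos : 0 < mform r δa (lclass r) := by rw [haL]; nlinarith [mul_self_nonneg (β 0)]
      have haa : 0 < mform r δa δa := by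
        rw [hδa, mform_sub_left, mform_smul_left, mform_smul_left, mform_comm r β δa,
          mform_comm r (lclass r) δa, haβ, haL]
        nlinarith [mul_self_nonneg (β 0)]
      have haα : mform r δa α = 0 := by
        have h1 : C * mform r δa α = B * mform r δa β := by
          rw [← mform_smul_right, ← mform_smul_right]
          congr 1
          have : C • α - B • β = 0 := h0
          have := sub_eq_zero.mp this
          exact this
        rw [haβ, mul_zero] at h1
        exact (mul_eq_zero.mp h1).resolve_left hββ.ne
      have hne : δa ≠ 0 := by
        intro h; rw [h, hzL] at haLpos; exact lt_irrefl 0 haLpos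
      have := hjjj δa hne haa.le haLpos.le haβ
      rw [haα] at this; exact lt_irrefl 0 this
    · -- δc itself (up to sign) violates (jjj)
      rcases le_or_gt 0 (mform r δc (lclass r)) with hsgn | hsgn
      · have := hjjj δc h0 hcc.ge hsgn hcβ
        rw [hcα] at this; exact lt_irrefl 0 this
      · have hne : -δc ≠ 0 := fun h => h0 (by simpa using neg_eq_zero.mp h)
        have h1 : mform r (-δc) (-δc) = 0 := by
          rw [mform_neg_left, mform_comm, mform_neg_left, mform_comm, hcc]; ring
        have h2 : 0 ≤ mform r (-δc) (lclass r) := by rw [mform_neg_left]; linarith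
        have h3 : mform r (-δc) β = 0 := by rw [mform_neg_left, hcβ]; ring
        have := hjjj (-δc) hne h1.ge h2 h3
        rw [mform_neg_left, hcα] at this
        simp at this
  · -- B^2 < A*C : the plane spanned by α, β is negative definite
    set e : ℝ := A * C - B^2 with he
    have hepos : 0 < e := by rw [he]; linarith
    have hnegdef : ∀ x y : ℝ, A * x^2 + 2*B*x*y + C*y^2 ≤ 0 := by
      intro x y
      nlinarith [sq_nonneg (A*x + B*y), mul_nonneg hepos.le (sq_nonneg y)]
    set c1 : ℝ := C * (α 0) - B * (β 0) with hc1
    set c2 : ℝ := A * (β 0) - B * (α 0) with hc2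
    set δb : Fin (r+1) → ℝ := e • lclass r - (c1 • α + c2 • β) with hδb
    have hexp : ∀ w, mform r δb w
        = e * mform r (lclass r) w - (c1 * mform r α w + c2 * mform r β w) := by
      intro w
      rw [hδb, mform_sub_left, mform_smul_left, mform_add_left, mform_smul_left,
        mform_smul_left]
    have hLα : mform r (lclass r) α = α 0 := by rw [mform_comm, mform_L]
    have hLβ : mform r (lclass r) β = β 0 := by rw [mform_comm, mform_L]
    have hbα : mform r δb α = 0 := by
      rw [hexp, hLα, ← hA, mform_comm r β α, ← hB, hc1, hc2, he]; ring
    have hbβ : mform r δb β = 0 := by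
      rw [hexp, hLβ, ← hB, ← hC, hc1, hc2, he]; ring
    have hbL : 0 < mform r δb (lclass r) := by
      rw [hexp (lclass r), mform_LL, mform_L, mform_L, hc1, hc2]
      nlinarith [hnegdef (β 0) (-(α 0)), hepos]
    have hbb : 0 < mform r δb δb := by
      rw [hexp δb, mform_comm r α δb, hbα, mform_comm r β δb, hbβ,
        mform_comm r (lclass r) δb]
      nlinarith [mul_pos hepos hbL]
    have hne : δb ≠ 0 := by
      intro h; rw [h, hzL] at hbL; exact lt_irrefl 0 hbL
    have := hjjj δb hne hbb.le hbL.le hbβ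
    rw [hbα] at this; exact lt_irrefl 0 this

/-- Positive discriminant implies (j). -/
lemma disc_implies_j (r : ℕ) (α β γ : Fin (r+1) → ℝ)
    (hαα : mform r α α < 0) (hββ : mform r β β < 0) (hαβ : mform r α β < 0)
    (hγγ : 0 < mform r γ γ) (hγL : 0 < mform r γ (lclass r))
    (hαγ : mform r α γ ≤ 0) (hβγ : 0 ≤ mform r β γ)
    (hD : mform r α α * mform r β β < (mform r α β)^2) :
    β ∈ interior {x : Fin (r + 1) → ℝ | ∃ q ∈ Qbar r, ∃ t : ℝ, 0 ≤ t ∧ x = q + t • α} := by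
  set A := mform r α α with hA
  set B := mform r α β with hB
  set C := mform r β β with hC
  set t : ℝ := B / C with ht
  have htpos : 0 < t := div_pos_iff.mpr (Or.inr ⟨hαβ, hββ⟩)
  set q : Fin (r+1) → ℝ := t • β - α with hq
  have hqq : 0 < mform r q q := by
    rw [hq, quad_eval, ← hA, ← hB, ← hC]
    have hval : C * t^2 - 2 * B * t + A = (A * C - B^2) / C := by
      rw [ht]
      have hCne : C ≠ 0 := hββ.ne
      field_simp
      ring
    have : (0:ℝ) < (A * C - B^2) / C := div_pos_iff.mpr (Or.inr ⟨by linarith, hββ⟩)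
    linarith [hval, this]
  have hqγ : 0 ≤ mform r q γ := by
    rw [hq, mform_sub_left, mform_smul_left]
    nlinarith [mul_nonneg htpos.le hβγ]
  have hγ0 : 0 < γ 0 := by rw [← mform_L r γ]; exact hγL
  have hq0 : 0 < q 0 := by
    rcases (mform_apply0_ne r q hqq).lt_or_gt with hneg | hpos
    · exfalso
      have hmm : mform r (-q) (-q) = mform r q q := by
        rw [mform_neg_left, mform_comm, mform_neg_left, mform_comm]; ring
      have h0 : 0 < (-q) 0 := by simp [hneg]
      have := mform_pair_pos r (-q) γ (by rw [hmm]; exact hqq) h0 hγγ hγ0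
      rw [mform_neg_left] at this
      linarith
    · exact hpos
  -- the open set around β
  set g : (Fin (r+1) → ℝ) → (Fin (r+1) → ℝ) := fun x => x - (1/t) • α with hg
  set U : Set (Fin (r+1) → ℝ) :=
    g ⁻¹' {y : Fin (r+1) → ℝ | 0 < mform r y y ∧ 0 < y 0} with hU
  have hUopen : IsOpen U :=
    (open_pos_cone r).preimage (continuous_id.sub continuous_const)
  have ht1 : (1/t) * t = 1 := by field_simp
  have hβq : g β = (1/t) • q := by
    rw [hg, hq]
    simp only [smul_sub, smul_smul, ht1, one_smul]
  have hβU : β ∈ U := by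
    rw [hU, Set.mem_preimage, hβq]
    constructor
    · rw [mform_smul_left, mform_smul_right]
      have h1t : 0 < 1/t := by positivity
      positivity
    · simp only [Pi.smul_apply, smul_eq_mul]
      positivity
  have hUsub : U ⊆ {x : Fin (r + 1) → ℝ | ∃ q' ∈ Qbar r, ∃ s : ℝ, 0 ≤ s ∧ x = q' + s • α} := by
    intro x hx
    obtain ⟨h1, h2⟩ := hx
    refine ⟨g x, ⟨h1.le, by rw [mform_L]; exact h2.le⟩, 1/t, by positivity, ?_⟩
    rw [hg]
    module
  exact interior_maximal hUsub hUopen hβU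

theorem stmt1 (r : ℕ) (hr : 1 ≤ r) (α β γ : Fin (r + 1) → ℝ)
    (hαα : mform r α α < 0) (hββ : mform r β β < 0) (hαβ : mform r α β < 0)
    (hγγ : 0 < mform r γ γ) (hγL : 0 < mform r γ (lclass r))
    (hαγ : mform r α γ ≤ 0) (hβγ : 0 ≤ mform r β γ) :
    ((β ∈ interior {x : Fin (r + 1) → ℝ | ∃ q ∈ Qbar r, ∃ t : ℝ, 0 ≤ t ∧ x = q + t • α}) ↔
      (∃ t₁ t₂ : ℝ, t₁ ≠ t₂ ∧ mform r (t₁ • β - α) (t₁ • β - α) = 0 ∧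
        mform r (t₂ • β - α) (t₂ • β - α) = 0)) ∧
    ((∃ t₁ t₂ : ℝ, t₁ ≠ t₂ ∧ mform r (t₁ • β - α) (t₁ • β - α) = 0 ∧
        mform r (t₂ • β - α) (t₂ • β - α) = 0) ↔
      (∀ δ : Fin (r + 1) → ℝ, δ ≠ 0 → 0 ≤ mform r δ δ → 0 ≤ mform r δ (lclass r) →
        mform r δ β = 0 → mform r δ α < 0)) := by
  have hri := roots_iff r α β hββ
  constructor
  · constructor
    · intro hj
      rcases lt_or_ge (mform r α α * mform r β β) ((mform r α β)^2) with h | h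
      · exact hri.mpr h
      · exact absurd (j_implies_jjj r α β hj) (not_jjj r α β hαα hββ hαβ h)
    · intro hjj
      exact disc_implies_j r α β γ hαα hββ hαβ hγγ hγL hαγ hβγ (hri.mp hjj)
  · constructor
    · intro hjj
      exact j_implies_jjj r α β
        (disc_implies_j r α β γ hαα hββ hαβ hγγ hγL hαγ hβγ (hri.mp hjj))
    · intro hjjj
      rcases lt_or_ge (mform r α α * mform r β β) ((mform r α β)^2) with h | h
      · exact hri.mpr h
      · exact absurd hjjj (not_jjj r α β hαα hββ hαβ h)
end

section
/- Assume r = 9 (so ⟨K,K⟩ = 0 and −K lies on the boundary of Q). Then: (1) every element of Q̄ + ℝ_{≥0}·K lies in the half-space {u ∈ V : ⟨K,u⟩ ≤ 0}; (2) every u ∈ V with ⟨K,u⟩ < 0 can be written as u = q + tK with q ∈ Q and t ≥ 0. Consequently, the closure of Q + ℝ_{≥0}·K equals the half-space {u ∈ V : ⟨K,u⟩ ≤ 0}. -/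
open scoped BigOperators

lemma mform_lclass (r : ℕ) (a : Fin (r + 1) → ℝ) : mform r a (lclass r) = a 0 := by
  simp [mform, lclass, Fin.succ_ne_zero]

lemma mform_kclass_left (r : ℕ) (u : Fin (r + 1) → ℝ) :
    mform r (kclass r) u = -3 * u 0 - ∑ i : Fin r, u i.succ := by
  simp [mform, kclass, Fin.succ_ne_zero]

lemma mform_kk : mform 9 (kclass 9) (kclass 9) = 0 := by
  simp [mform, kclass, Fin.succ_ne_zero]
  norm_num

lemma mform_kl : mform 9 (kclass 9) (lclass 9) = -3 := by
  simp [mform, kclass, lclass, Fin.succ_ne_zero]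

lemma mform_add_smul_right (r : ℕ) (k q l : Fin (r + 1) → ℝ) (t : ℝ) :
    mform r k (q + t • l) = mform r k q + t * mform r k l := by
  simp only [mform, Pi.add_apply, Pi.smul_apply, smul_eq_mul]
  have h : ∑ i : Fin r, k i.succ * (q i.succ + t * l i.succ)
      = (∑ i : Fin r, k i.succ * q i.succ) + t * ∑ i : Fin r, k i.succ * l i.succ := by
    rw [Finset.mul_sum, ← Finset.sum_add_distrib]
    exact Finset.sum_congr rfl fun i _ => by ring
  rw [h]; ring

lemma mform_quad (r : ℕ) (u k : Fin (r + 1) → ℝ) (t : ℝ) :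
    mform r (u - t • k) (u - t • k)
      = mform r u u - 2 * t * mform r k u + t ^ 2 * mform r k k := by
  simp only [mform, Pi.sub_apply, Pi.smul_apply, smul_eq_mul]
  have h : ∑ i : Fin r, (u i.succ - t * k i.succ) * (u i.succ - t * k i.succ)
      = (∑ i : Fin r, u i.succ * u i.succ) - 2 * t * (∑ i : Fin r, k i.succ * u i.succ)
        + t ^ 2 * ∑ i : Fin r, k i.succ * k i.succ := by
    rw [Finset.mul_sum, Finset.mul_sum, ← Finset.sum_sub_distrib, ← Finset.sum_add_distrib]
    exact Finset.sum_congr rfl fun i _ => by ring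
  rw [h]; ring

/-- For `q ∈ Q̄` (r = 9) one has `⟨K,q⟩ ≤ 0`, by Cauchy–Schwarz. -/
lemma k_nonpos_on_Qbar (q : Fin (9+1) → ℝ) (hq : q ∈ Qbar 9) :
    mform 9 (kclass 9) q ≤ 0 := by
  obtain ⟨hqq, hq0⟩ := hq
  rw [mform_lclass] at hq0
  have hQ2 : (∑ i : Fin 9, q i.succ * q i.succ) ≤ q 0 * q 0 := by
    have := hqq
    simp only [mform] at this
    linarith
  have hCS : (∑ i : Fin 9, q i.succ * (1 : ℝ)) ^ 2
      ≤ (∑ i : Fin 9, (q i.succ) ^ 2) * ∑ i : Fin 9, (1 : ℝ) ^ 2 :=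
    Finset.sum_mul_sq_le_sq_mul_sq (Finset.univ : Finset (Fin 9)) (fun i : Fin 9 => q i.succ)
      (fun _ => (1 : ℝ))
  have h1 : (∑ i : Fin 9, q i.succ) ^ 2 ≤ 9 * ∑ i : Fin 9, q i.succ * q i.succ := by
    simpa [mul_one, sq, mul_comm] using hCS
  rw [mform_kclass_left]
  nlinarith [h1, hQ2, hq0, sq_nonneg ((∑ i : Fin 9, q i.succ) + 3 * q 0)]

theorem stmt7 (r : ℕ) (hr : r = 9) :
    (∀ u : Fin (r + 1) → ℝ, (∃ q ∈ Qbar r, ∃ t : ℝ, 0 ≤ t ∧ u = q + t • kclass r) →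
      mform r (kclass r) u ≤ 0) ∧
    (∀ u : Fin (r + 1) → ℝ, mform r (kclass r) u < 0 →
      ∃ q ∈ Qset r, ∃ t : ℝ, 0 ≤ t ∧ u = q + t • kclass r) ∧
    closure {u : Fin (r + 1) → ℝ | ∃ q ∈ Qset r, ∃ t : ℝ, 0 ≤ t ∧ u = q + t • kclass r} =
      {u : Fin (r + 1) → ℝ | mform r (kclass r) u ≤ 0} := by
  subst hr
  -- Part 1
  have part1 : ∀ u : Fin 10 → ℝ,
      (∃ q ∈ Qbar 9, ∃ t : ℝ, 0 ≤ t ∧ u = q + t • kclass 9) →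
      mform 9 (kclass 9) u ≤ 0 := by
    rintro u ⟨q, hq, t, ht, rfl⟩
    rw [mform_add_smul_right, mform_kk, mul_zero, add_zero]
    exact k_nonpos_on_Qbar q hq
  -- Part 2
  have part2 : ∀ u : Fin 10 → ℝ, mform 9 (kclass 9) u < 0 →
      ∃ q ∈ Qset 9, ∃ t : ℝ, 0 ≤ t ∧ u = q + t • kclass 9 := by
    intro u hu
    set c := mform 9 (kclass 9) u with hc
    set A := mform 9 u u with hA
    set t : ℝ := max 0 (max (1 - u 0 / 3) (A / (2 * c))) with htdef
    have ht0 : 0 ≤ t := le_max_left _ _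
    have ht1 : 1 - u 0 / 3 ≤ t := le_trans (le_max_left _ _) (le_max_right _ _)
    have ht2 : A / (2 * c) ≤ t := le_trans (le_max_right _ _) (le_max_right _ _)
    refine ⟨u - t • kclass 9, ⟨?_, ?_⟩, t, ht0, by abel⟩
    · -- ⟨q,q⟩ ≥ 0
      rw [mform_quad, mform_kk, ← hA, ← hc]
      have h2c : 2 * c < 0 := by linarith
      have : t * (2 * c) ≤ A := by
        rw [div_le_iff_of_neg h2c] at ht2
        linarith
      nlinarith
    · -- ⟨q,L⟩ > 0
      rw [mform_lclass]
      have : (u - t • kclass 9) 0 = u 0 + 3 * t := by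
        simp [kclass]; ring
      rw [this]
      linarith
  refine ⟨part1, part2, ?_⟩
  -- Part 3
  have hcont : Continuous fun u : Fin 10 → ℝ => mform 9 (kclass 9) u := by
    simp only [mform]
    exact (continuous_const.mul (continuous_apply 0)).sub
      (continuous_finset_sum Finset.univ fun i _ => continuous_const.mul (continuous_apply i.succ))
  apply le_antisymm
  · refine closure_minimal ?_ (isClosed_le hcont continuous_const)
    rintro u ⟨q, hq, t, ht, rfl⟩
    exact part1 _ ⟨q, ⟨hq.1, hq.2.le⟩, t, ht, rfl⟩
  · intro u hu
    have hu' : mform 9 (kclass 9) u ≤ 0 := hu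
    have htend : Filter.Tendsto (fun n : ℕ => u + (1 / ((n : ℝ) + 1)) • lclass 9)
        Filter.atTop (nhds u) := by
      have h0 : Filter.Tendsto (fun n : ℕ => (1 / ((n : ℝ) + 1))) Filter.atTop (nhds 0) :=
        tendsto_one_div_add_atTop_nhds_zero_nat
      have := Filter.Tendsto.add (tendsto_const_nhds (x := u))
        (h0.smul_const (lclass 9))
      simpa using this
    refine mem_closure_of_tendsto htend (Filter.Eventually.of_forall fun n => ?_)
    apply part2
    rw [mform_add_smul_right, mform_kl]
    have hpos : (0 : ℝ) < 1 / ((n : ℝ) + 1) := by positivity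
    nlinarith
end
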